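/- Let e: ℝⁿ → ℝⁿ and f: ℝⁿ×ℝᵐ → ℝⁿ be continuously differentiable with Jacobians E(x) = ∂e/∂x and F(x,u) = ∂f/∂x, let g: ℝⁿ×ℝᵐ → ℝᵖ be continuously differentiable with G(x,u) = ∂g/∂x, let P be symmetric positive definite and μ > 0, and suppose the contraction inequality |F(x,u)Δ|²_{P⁻¹} − |E(x)Δ|²_{P⁻¹} + |G(x,u)Δ|² ≤ −μ|Δ|² holds for all x ∈ ℝⁿ, u ∈ ℝᵐ, Δ ∈ ℝⁿ. Let u: ℕ → ℝᵐ, and let x: ℕ → ℝⁿ and Δ: ℕ → ℝⁿ be sequences satisfying the differential dynamics E(x(t+1))Δ(t+1) = F(x(t),u(t))Δ(t) for all t. Then for every T ∈ ℕ, Σ_{t=0}^{T} ( |G(x(t),u(t))Δ(t)|² + μ|Δ(t)|² ) ≤ |E(x(0))Δ(0)|²_{P⁻¹}. -/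

import Mathlib

open Matrix

/-- Let `e, f, g` be continuously differentiable with Jacobians
(with respect to `x`) `E(x)`, `F(x,u)`, `G(x,u)`, and suppose the contraction
inequality `|F(x,u)Δ|²_{P⁻¹} − |E(x)Δ|²_{P⁻¹} + |G(x,u)Δ|² ≤ −μ|Δ|²` holds for
all `x, u, Δ`. Then along any solution of the differential dynamics
`E(x(t+1))Δ(t+1) = F(x(t),u(t))Δ(t)`, for every `T`,
`Σ_{t=0}^{T} ( |G(x(t),u(t))Δ(t)|² + μ|Δ(t)|² ) ≤ |E(x(0))Δ(0)|²_{P⁻¹}`. -/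
theorem stmt14 {n m p : ℕ}
    (e : (Fin n → ℝ) → (Fin n → ℝ))
    (f : (Fin n → ℝ) → (Fin m → ℝ) → (Fin n → ℝ))
    (g : (Fin n → ℝ) → (Fin m → ℝ) → (Fin p → ℝ))
    (E : (Fin n → ℝ) → Matrix (Fin n) (Fin n) ℝ)
    (F : (Fin n → ℝ) → (Fin m → ℝ) → Matrix (Fin n) (Fin n) ℝ)
    (G : (Fin n → ℝ) → (Fin m → ℝ) → Matrix (Fin p) (Fin n) ℝ)
    (hE : ∀ x, HasFDerivAt e
      (LinearMap.toContinuousLinearMap (Matrix.toLin' (E x))) x)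
    (hF : ∀ (x : Fin n → ℝ) (u : Fin m → ℝ), HasFDerivAt (fun z => f z u)
      (LinearMap.toContinuousLinearMap (Matrix.toLin' (F x u))) x)
    (hG : ∀ (x : Fin n → ℝ) (u : Fin m → ℝ), HasFDerivAt (fun z => g z u)
      (LinearMap.toContinuousLinearMap (Matrix.toLin' (G x u))) x)
    (hEcont : Continuous E)
    (hFcont : Continuous fun q : (Fin n → ℝ) × (Fin m → ℝ) => F q.1 q.2)
    (hGcont : Continuous fun q : (Fin n → ℝ) × (Fin m → ℝ) => G q.1 q.2)
    (P : Matrix (Fin n) (Fin n) ℝ) (hP : P.PosDef) (μ : ℝ) (hμ : 0 < μ)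
    (hcontr : ∀ (x : Fin n → ℝ) (u : Fin m → ℝ) (Δ : Fin n → ℝ),
      (F x u *ᵥ Δ) ⬝ᵥ (P⁻¹ *ᵥ (F x u *ᵥ Δ))
        - (E x *ᵥ Δ) ⬝ᵥ (P⁻¹ *ᵥ (E x *ᵥ Δ))
        + (G x u *ᵥ Δ) ⬝ᵥ (G x u *ᵥ Δ) ≤ -μ * (Δ ⬝ᵥ Δ))
    (u : ℕ → Fin m → ℝ) (x : ℕ → Fin n → ℝ) (Δ : ℕ → Fin n → ℝ)
    (hdiff : ∀ t : ℕ, E (x (t + 1)) *ᵥ Δ (t + 1) = F (x t) (u t) *ᵥ Δ t) :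
    ∀ T : ℕ,
      ∑ t ∈ Finset.range (T + 1),
          ((G (x t) (u t) *ᵥ Δ t) ⬝ᵥ (G (x t) (u t) *ᵥ Δ t) + μ * (Δ t ⬝ᵥ Δ t))
        ≤ (E (x 0) *ᵥ Δ 0) ⬝ᵥ (P⁻¹ *ᵥ (E (x 0) *ᵥ Δ 0)) := by
  intro T
  have hVnn : ∀ t : ℕ, (0:ℝ) ≤ (E (x t) *ᵥ Δ t) ⬝ᵥ (P⁻¹ *ᵥ (E (x t) *ᵥ Δ t)) :=
    fun t => hP.inv.posSemidef.dotProduct_mulVec_nonneg _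
  have hstep : ∀ t : ℕ,
      (G (x t) (u t) *ᵥ Δ t) ⬝ᵥ (G (x t) (u t) *ᵥ Δ t) + μ * (Δ t ⬝ᵥ Δ t)
        ≤ (E (x t) *ᵥ Δ t) ⬝ᵥ (P⁻¹ *ᵥ (E (x t) *ᵥ Δ t))
          - (E (x (t+1)) *ᵥ Δ (t+1)) ⬝ᵥ (P⁻¹ *ᵥ (E (x (t+1)) *ᵥ Δ (t+1))) := by
    intro t
    have h := hcontr (x t) (u t) (Δ t)
    rw [hdiff t]
    linarith
  calc ∑ t ∈ Finset.range (T + 1),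
          ((G (x t) (u t) *ᵥ Δ t) ⬝ᵥ (G (x t) (u t) *ᵥ Δ t) + μ * (Δ t ⬝ᵥ Δ t))
      ≤ ∑ t ∈ Finset.range (T + 1),
          ((E (x t) *ᵥ Δ t) ⬝ᵥ (P⁻¹ *ᵥ (E (x t) *ᵥ Δ t))
            - (E (x (t+1)) *ᵥ Δ (t+1)) ⬝ᵥ (P⁻¹ *ᵥ (E (x (t+1)) *ᵥ Δ (t+1)))) :=
        Finset.sum_le_sum fun t _ => hstep t
    _ = (E (x 0) *ᵥ Δ 0) ⬝ᵥ (P⁻¹ *ᵥ (E (x 0) *ᵥ Δ 0))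
          - (E (x (T+1)) *ᵥ Δ (T+1)) ⬝ᵥ (P⁻¹ *ᵥ (E (x (T+1)) *ᵥ Δ (T+1))) :=
        Finset.sum_range_sub' (fun t => (E (x t) *ᵥ Δ t) ⬝ᵥ (P⁻¹ *ᵥ (E (x t) *ᵥ Δ t))) (T+1)
    _ ≤ _ := by linarith [hVnn (T+1)]
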